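/- arXiv:0808.2349 — 2 statements merged into one kernel-verified Lean document; each statement's English description precedes it below -/
import Mathlib

section
/- For all integers d ≥ 1, n ≥ 1 and 0 ≤ k ≤ d, D(d,n,k) = Σ_{i=0}^{k} (-1)^i · C(d+1,i) · (n(k-i)+1)^d, where D(d,n,k) := d! · n^d · B_{d+1}(k + 1/n). -/
open MeasureTheory Set

/-- B-splines: `B 1` is the indicator of `[0,1)`, and `B d x = ∫_0^1 B (d-1) (x - t) dt`. -/
noncomputable def B : ℕ → ℝ → ℝ
  | 0, _ => 0
  | 1, x => if 0 ≤ x ∧ x < 1 then 1 else 0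
  | d + 2, x => ∫ t in (0:ℝ)..(1:ℝ), B (d + 1) (x - t)

/-- Truncated power. -/
noncomputable def tp (m : ℕ) (y : ℝ) : ℝ := if 0 ≤ y then y ^ m else 0

lemma tp_mono (m : ℕ) : Monotone (tp m) := by
  intro a b hab
  unfold tp
  split_ifs with ha hb hb
  · exact pow_le_pow_left₀ ha hab m
  · exact absurd (ha.trans hab) hb
  · exact pow_nonneg hb m
  · exact le_rfl
  
lemma tp_cont (m : ℕ) : Continuous (tp (m + 1)) := by
  have : tp (m + 1) = fun y => (max y 0) ^ (m + 1) := by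
    funext y
    unfold tp
    split_ifs with h
    · rw [max_eq_left h]
    · rw [max_eq_right (le_of_not_ge h), zero_pow (Nat.succ_ne_zero m)]
  rw [this]
  exact (continuous_id.max continuous_const).pow _

lemma tp_hasDeriv (m : ℕ) (y : ℝ) :
    HasDerivWithinAt (fun z => tp (m + 1) z / (m + 1)) (tp m y) (Ici y) y := by
  rcases lt_or_ge y 0 with hy | hy
  · have h0 : tp m y = 0 := by unfold tp; rw [if_neg (not_le.mpr hy)]
    rw [h0]
    have hF : (fun z => tp (m + 1) z / ((m:ℝ) + 1)) =ᶠ[nhds y] fun _ => 0 := by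
      filter_upwards [Iio_mem_nhds hy] with z hz
      unfold tp
      rw [if_neg (not_le.mpr hz), zero_div]
    exact ((hasDerivAt_const y (0:ℝ)).congr_of_eventuallyEq hF).hasDerivWithinAt
  · have h0 : tp m y = y ^ m := by unfold tp; rw [if_pos hy]
    have hD : HasDerivAt (fun z : ℝ => z ^ (m + 1) / (m + 1)) (y ^ m) y := by
      have := (hasDerivAt_pow (m + 1) y).div_const ((m : ℝ) + 1)
      have hne : ((m : ℝ) + 1) ≠ 0 := by positivity
      simpa [Nat.add_sub_cancel, mul_comm, mul_div_assoc, div_self hne, Nat.cast_add,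
        Nat.cast_one] using this
    rw [h0]
    refine (hD.hasDerivWithinAt).congr (fun z hz => ?_) ?_
    · unfold tp; rw [if_pos (hy.trans hz)]
    · unfold tp; rw [if_pos hy]

lemma tp_integral (m : ℕ) (a b : ℝ) (hab : a ≤ b) :
    ∫ s in a..b, tp m s = tp (m + 1) b / (m + 1) - tp (m + 1) a / (m + 1) := by
  refine intervalIntegral.integral_eq_sub_of_hasDeriv_right_of_le (f := fun z => tp (m+1) z / ((m:ℝ)+1)) hab ?_ ?_ ?_
  · exact ((tp_cont m).div_const _).continuousOn
  · exact fun x _ => (tp_hasDeriv m x).mono Ioi_subset_Ici_self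
  · exact (tp_mono m).intervalIntegrable

lemma tp_integral' (m : ℕ) (c : ℝ) :
    ∫ t in (0:ℝ)..1, tp m (c - t) = tp (m + 1) c / (m + 1) - tp (m + 1) (c - 1) / (m + 1) := by
  rw [intervalIntegral.integral_comp_sub_left (tp m) c]
  simpa using tp_integral m (c - 1) c (by linarith)

lemma pascal_sum (d : ℕ) (f : ℕ → ℝ) :
    ∑ i ∈ Finset.range (d + 2), (-1 : ℝ) ^ i * ((d + 1).choose i : ℝ) * (f i - f (i + 1)) =
    ∑ i ∈ Finset.range (d + 3), (-1 : ℝ) ^ i * ((d + 2).choose i : ℝ) * f i := by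
  have h0 : ∀ i : ℕ, ((d + 2).choose (i + 1) : ℝ)
      = ((d + 1).choose i : ℝ) + ((d + 1).choose (i + 1) : ℝ) := by
    intro i
    rw [show d + 2 = (d + 1) + 1 from rfl, Nat.choose_succ_succ]
    push_cast; ring
  rw [show d + 3 = (d + 2) + 1 from rfl, Finset.sum_range_succ' _ (d + 2)]
  have hR : ∑ i ∈ Finset.range (d + 2), (-1 : ℝ) ^ (i + 1) * ((d + 2).choose (i + 1) : ℝ) * f (i + 1)
      = ∑ i ∈ Finset.range (d + 2), ((-1 : ℝ) ^ (i + 1) * ((d + 1).choose i : ℝ) * f (i + 1)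
          + (-1 : ℝ) ^ (i + 1) * ((d + 1).choose (i + 1) : ℝ) * f (i + 1)) :=
    Finset.sum_congr rfl fun i _ => by rw [h0]; ring
  rw [hR, Finset.sum_add_distrib]
  have hA : ∑ i ∈ Finset.range (d + 2), (-1 : ℝ) ^ i * ((d + 1).choose i : ℝ) * f i
      = (∑ i ∈ Finset.range (d + 1),
          (-1 : ℝ) ^ (i + 1) * ((d + 1).choose (i + 1) : ℝ) * f (i + 1))
        + (-1 : ℝ) ^ 0 * ((d + 1).choose 0 : ℝ) * f 0 :=
    Finset.sum_range_succ' _ (d + 1)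
  have hB : ∑ i ∈ Finset.range (d + 2), (-1 : ℝ) ^ (i + 1) * ((d + 1).choose (i + 1) : ℝ) * f (i + 1)
      = (∑ i ∈ Finset.range (d + 1),
          (-1 : ℝ) ^ (i + 1) * ((d + 1).choose (i + 1) : ℝ) * f (i + 1))
        + (-1 : ℝ) ^ (d + 1 + 1) * ((d + 1).choose (d + 1 + 1) : ℝ) * f (d + 1 + 1) :=
    Finset.sum_range_succ _ (d + 1)
  have hz : ((d + 1).choose (d + 1 + 1) : ℝ) = 0 := by
    rw [Nat.choose_eq_zero_of_lt (by omega)]; norm_num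
  have hneg : ∑ i ∈ Finset.range (d + 2), (-1 : ℝ) ^ (i + 1) * ((d + 1).choose i : ℝ) * f (i + 1)
      = -∑ i ∈ Finset.range (d + 2), (-1 : ℝ) ^ i * ((d + 1).choose i : ℝ) * f (i + 1) := by
    rw [← Finset.sum_neg_distrib]
    exact Finset.sum_congr rfl fun i _ => by ring
  simp only [mul_sub, Finset.sum_sub_distrib]
  rw [hA, hB, hz, hneg]
  simp only [Nat.choose_zero_right, Nat.cast_one]
  ring

lemma B_formula (d : ℕ) (x : ℝ) :
    B (d + 1) x = (1 / d.factorial : ℝ) *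
      ∑ i ∈ Finset.range (d + 2), (-1 : ℝ) ^ i * ((d + 1).choose i : ℝ) * tp d (x - i) := by
  induction d generalizing x with
  | zero =>
    show (if 0 ≤ x ∧ x < 1 then (1:ℝ) else 0) = _
    rw [Finset.sum_range_succ, Finset.sum_range_one]
    unfold tp
    norm_num
    rcases lt_or_ge x 0 with h | h
    · rw [if_neg (by intro hc; exact absurd hc.1 (not_le.mpr h)),
        if_neg (not_le.mpr h), if_neg (by intro hc; linarith)]
      ring
    rcases lt_or_ge x 1 with h' | h'
    · rw [if_pos ⟨h, h'⟩, if_pos h, if_neg (by intro hc; linarith)]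
      norm_num
    · rw [if_neg (by intro hc; linarith [hc.2]), if_pos h, if_pos (by linarith)]
      norm_num
  | succ d ih =>
    show (∫ t in (0:ℝ)..1, B (d + 1) (x - t)) = _
    have h1 : ∀ t : ℝ, B (d + 1) (x - t)
        = ∑ i ∈ Finset.range (d + 2),
            ((1 / d.factorial : ℝ) * ((-1 : ℝ) ^ i * ((d + 1).choose i : ℝ)))
              * tp d ((x - i) - t) := by
      intro t
      rw [ih (x - t), Finset.mul_sum]
      exact Finset.sum_congr rfl fun i _ => by
        rw [show x - t - (i : ℝ) = (x - i) - t by ring]; ring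
    have hanti : ∀ c : ℝ, Antitone fun t : ℝ => tp d (c - t) := by
      intro c
      exact (tp_mono d).comp_antitone fun a b hab => by simp; linarith
    simp only [h1]
    have hswap := intervalIntegral.integral_finset_sum (μ := MeasureTheory.volume)
      (a := (0:ℝ)) (b := (1:ℝ)) (s := Finset.range (d + 2))
      (f := fun (i : ℕ) (t : ℝ) =>
        ((1 / d.factorial : ℝ) * ((-1 : ℝ) ^ i * ((d + 1).choose i : ℝ))) * tp d ((x - i) - t))
      (fun i _ => ((hanti ((x : ℝ) - i)).intervalIntegrable).const_mul _)
    rw [hswap]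
    have h2 : ∀ i ∈ Finset.range (d + 2),
        (∫ t in (0:ℝ)..1,
          ((1 / d.factorial : ℝ) * ((-1 : ℝ) ^ i * ((d + 1).choose i : ℝ)))
            * tp d ((x - i) - t))
        = ((1 / d.factorial : ℝ) * ((-1 : ℝ) ^ i * ((d + 1).choose i : ℝ)))
            * (tp (d + 1) (x - i) / (d + 1) - tp (d + 1) (x - i - 1) / (d + 1)) := by
      intro i _
      rw [intervalIntegral.integral_const_mul, tp_integral']
    rw [Finset.sum_congr rfl h2]
    have h3 := pascal_sum d (fun j : ℕ => tp (d + 1) (x - j))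
    rw [show d + 1 + 2 = d + 3 from rfl, show d + 1 + 1 = d + 2 from rfl, ← h3,
      Finset.mul_sum]
    refine Finset.sum_congr rfl fun i _ => ?_
    have hc : x - (↑(i + 1) : ℝ) = x - i - 1 := by push_cast; ring
    simp only [hc]
    have hfac : ((d + 1).factorial : ℝ) = (d + 1) * d.factorial := by
      rw [Nat.factorial_succ]; push_cast; ring
    have h4 : (d.factorial : ℝ) ≠ 0 := Nat.cast_ne_zero.mpr (Nat.factorial_ne_zero d)
    have h5 : ((d : ℝ) + 1) ≠ 0 := by positivity
    rw [hfac]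
    simp only [div_eq_mul_inv, mul_inv]
    ring

theorem bspline_descent_poly_formula (d n k : ℕ) (hd : 1 ≤ d) (hn : 1 ≤ n) (hk : k ≤ d) :
    (Nat.factorial d : ℝ) * (n : ℝ) ^ d * B (d + 1) ((k : ℝ) + 1 / n) =
      ∑ i ∈ Finset.range (k + 1),
        (-1 : ℝ) ^ i * ((d + 1).choose i : ℝ) * ((n : ℝ) * ((k : ℝ) - i) + 1) ^ d := by
  have hn0 : (0 : ℝ) < (n : ℝ) := by exact_mod_cast hn
  have hn1 : (1 : ℝ) ≤ (n : ℝ) := by exact_mod_cast hn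
  have hinv : 1 / (n : ℝ) ≤ 1 := by rw [div_le_one hn0]; exact hn1
  have hinv0 : (0 : ℝ) < 1 / n := by positivity
  rw [B_formula d ((k : ℝ) + 1 / n)]
  have hsub : Finset.range (k + 1) ⊆ Finset.range (d + 2) :=
    Finset.range_subset_range.mpr (by omega)
  have hzero : ∀ i ∈ Finset.range (d + 2), i ∉ Finset.range (k + 1) →
      (-1 : ℝ) ^ i * ((d + 1).choose i : ℝ) * tp d ((k : ℝ) + 1 / n - i) = 0 := by
    intro i _ hi
    have hki : (k : ℝ) + 1 ≤ i := by
      have : k + 1 ≤ i := by simpa using hi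
      exact_mod_cast this
    have hy : (k : ℝ) + 1 / n - i ≤ 0 := by linarith
    have : tp d ((k : ℝ) + 1 / n - i) = 0 := by
      unfold tp
      split_ifs with h
      · rw [le_antisymm hy h, zero_pow (by omega)]
      · rfl
    rw [this, mul_zero]
  rw [← Finset.sum_subset hsub hzero]
  rw [Finset.mul_sum, Finset.mul_sum]
  refine Finset.sum_congr rfl fun i hi => ?_
  have hik : (i : ℝ) ≤ k := by
    have : i ≤ k := by simpa [Nat.lt_succ_iff] using hi
    exact_mod_cast this
  have htp : tp d ((k : ℝ) + 1 / n - i) = ((k : ℝ) - i + 1 / n) ^ d := by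
    unfold tp
    rw [if_pos (by linarith), show (k : ℝ) + 1 / n - i = (k : ℝ) - i + 1 / n by ring]
  have h4 : (d.factorial : ℝ) ≠ 0 := Nat.cast_ne_zero.mpr (Nat.factorial_ne_zero d)
  have hpow : (n : ℝ) ^ d * ((k : ℝ) - i + 1 / n) ^ d = ((n : ℝ) * ((k : ℝ) - i) + 1) ^ d := by
    rw [← mul_pow]
    congr 1
    field_simp
  rw [htp, ← hpow]
  field_simp
end

section
/- For all integers d ≥ 1, n ≥ 1 and all integers k, D(d,2n,k) = Σ_{j=0}^{d+1} C(d+1,j) · D(d,n,2k-j), where D(d,n,k) := d!·n^d·B_{d+1}(k + 1/n). -/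
open MeasureTheory

lemma B_succ_succ (d : ℕ) (x : ℝ) : B (d + 2) x = ∫ t in (0:ℝ)..(1:ℝ), B (d + 1) (x - t) := rfl

lemma B_measurable : ∀ d, Measurable (B d) := by
  intro d
  induction d using Nat.strong_induction_on with
  | _ d ih =>
    match d with
    | 0 => simpa [B] using measurable_const
    | 1 =>
      have : B 1 = Set.indicator (Set.Ico (0:ℝ) 1) (fun _ => (1:ℝ)) := by
        funext x
        simp [B, Set.indicator, Set.mem_Ico]
      rw [this]
      exact (measurable_const (a := (1:ℝ))).indicator measurableSet_Ico
    | d + 2 =>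
      have hm : Measurable (B (d+1)) := ih (d+1) (by omega)
      have : B (d+2) = fun x => ∫ t in Set.Ioc (0:ℝ) 1, B (d+1) (x - t) := by
        funext x
        rw [B_succ_succ, intervalIntegral.integral_of_le (by norm_num)]
      rw [this]
      exact (MeasureTheory.StronglyMeasurable.integral_prod_right
        (f := fun x t => B (d+1) (x - t))
        ((hm.comp (measurable_fst.sub measurable_snd)).stronglyMeasurable)).measurable

lemma B_nonneg : ∀ d x, 0 ≤ B d x := by
  intro d
  induction d using Nat.strong_induction_on with
  | _ d ih =>
    match d with
    | 0 => intro x; simp [B]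
    | 1 => intro x; simp only [B]; positivity
    | d + 2 =>
      intro x
      rw [B_succ_succ]
      exact intervalIntegral.integral_nonneg (by norm_num) (fun t _ => ih (d+1) (by omega) _)

lemma B_le_one : ∀ d x, B d x ≤ 1 := by
  intro d
  induction d using Nat.strong_induction_on with
  | _ d ih =>
    match d with
    | 0 => intro x; simp [B]
    | 1 => intro x; simp only [B]; split <;> norm_num
    | d + 2 =>
      intro x
      rw [B_succ_succ]
      have hint : IntervalIntegrable (fun t => B (d+1) (x - t)) volume 0 1 := by
        rw [intervalIntegrable_iff]
        refine ((MeasureTheory.integrableOn_const_iff (C := (1:ℝ))).2 (Or.inr measure_Ioc_lt_top)).mono'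
          (((B_measurable (d+1)).comp (measurable_const.sub measurable_id)).aestronglyMeasurable) ?_
        filter_upwards with t
        rw [Real.norm_eq_abs, abs_of_nonneg (B_nonneg _ _)]
        exact ih (d+1) (by omega) _
      calc ∫ t in (0:ℝ)..1, B (d+1) (x - t) ≤ ∫ _t in (0:ℝ)..1, (1:ℝ) :=
            intervalIntegral.integral_mono_on (by norm_num) hint intervalIntegrable_const
              (fun t _ => ih (d+1) (by omega) _)
        _ = 1 := by simp

lemma B_intervalIntegrable (m : ℕ) (y c a b : ℝ) :
    IntervalIntegrable (fun t => B m (y - c * t)) volume a b := by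
  rw [intervalIntegrable_iff]
  refine ((MeasureTheory.integrableOn_const_iff (C := (1:ℝ))).2 (Or.inr measure_Ioc_lt_top)).mono'
    (((B_measurable m).comp (measurable_const.sub (measurable_id.const_mul c))).aestronglyMeasurable) ?_
  filter_upwards with t
  rw [Real.norm_eq_abs, abs_of_nonneg (B_nonneg _ _)]
  exact B_le_one _ _

lemma B_half (d : ℕ) (y : ℝ) :
    ∫ t in (0:ℝ)..1, B (d + 1) (y - 2 * t) = (B (d + 2) y + B (d + 2) (y - 1)) / 2 := by
  have h1 : ∫ t in (0:ℝ)..1, B (d + 1) (y - 2 * t)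
      = (2:ℝ)⁻¹ • ∫ s in (0:ℝ)..2, B (d + 1) (y - s) := by
    have := intervalIntegral.integral_comp_mul_left (a := (0:ℝ)) (b := 1)
      (fun s => B (d + 1) (y - s)) (c := 2) (by norm_num)
    simpa using this
  have h2 : (∫ s in (0:ℝ)..1, B (d + 1) (y - s)) + ∫ s in (1:ℝ)..2, B (d + 1) (y - s)
      = ∫ s in (0:ℝ)..2, B (d + 1) (y - s) := by
    refine intervalIntegral.integral_add_adjacent_intervals ?_ ?_ <;>
      simpa using B_intervalIntegrable (d+1) y 1 _ _
  have h3 : ∫ s in (1:ℝ)..2, B (d + 1) (y - s) = ∫ s in (0:ℝ)..1, B (d + 1) (y - 1 - s) := by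
    have := intervalIntegral.integral_comp_add_right (a := (0:ℝ)) (b := 1)
      (fun s => B (d + 1) (y - s)) 1
    rw [show (0:ℝ)+1 = 1 by norm_num, show (1:ℝ)+1 = 2 by norm_num] at this
    rw [← this]
    congr 1 with s
    ring_nf
  rw [h1, ← h2, h3, ← B_succ_succ, ← B_succ_succ]
  simp [smul_eq_mul]
  ring

lemma B_refine (d : ℕ) (x : ℝ) :
    (2:ℝ) ^ d * B (d + 1) x
      = ∑ j ∈ Finset.range (d + 2), ((d + 1).choose j : ℝ) * B (d + 1) (2 * x - j) := by
  induction d generalizing x with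
  | zero =>
    simp only [pow_zero, one_mul]
    rw [Finset.sum_range_succ, Finset.sum_range_one]
    norm_num [B]
    rcases le_or_gt 0 x with h1 | h1
    · rcases lt_or_ge x 1 with h2 | h2
      · rcases lt_or_ge (2*x) 1 with h3 | h3
        · rw [if_pos ⟨h1, h2⟩, if_pos ⟨h1, h3⟩, if_neg (by intro h; linarith [h.1])]; ring
        · rw [if_pos ⟨h1, h2⟩, if_neg (by intro h; linarith [h.2]),
            if_pos ⟨h3, by linarith⟩]; ring
      · rw [if_neg (by intro h; linarith [h.2]), if_neg (by intro h; linarith [h.2]),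
          if_neg (by intro h; linarith [h.2])]; ring
    · rw [if_neg (by intro h; linarith [h.1]), if_neg (by intro h; linarith [h.1]),
        if_neg (by intro h; linarith [h.1])]; ring
  | succ d ih =>
    set f : ℕ → ℝ := fun j => B (d + 2) (2 * x - j) with hf
    have step1 : (2:ℝ) ^ (d+1) * B (d + 2) x
        = ∑ j ∈ Finset.range (d + 2), ((d + 1).choose j : ℝ) * (f j + f (j + 1)) := by
      calc (2:ℝ) ^ (d+1) * B (d + 2) x
          = 2 * ∫ t in (0:ℝ)..1, (2:ℝ) ^ d * B (d + 1) (x - t) := by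
            rw [B_succ_succ, intervalIntegral.integral_const_mul]; ring
        _ = 2 * ∫ t in (0:ℝ)..1, ∑ j ∈ Finset.range (d + 2),
              ((d + 1).choose j : ℝ) * B (d + 1) ((2 * x - j) - 2 * t) := by
            congr 1
            refine intervalIntegral.integral_congr fun t _ => ?_
            rw [ih (x - t)]
            exact Finset.sum_congr rfl fun j _ => by
              rw [show 2 * (x - t) - (j:ℝ) = (2 * x - j) - 2 * t by ring]
        _ = 2 * ∑ j ∈ Finset.range (d + 2),
              ((d + 1).choose j : ℝ) * ∫ t in (0:ℝ)..1, B (d + 1) ((2 * x - j) - 2 * t) := by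
            congr 1
            refine (intervalIntegral.integral_finset_sum
              (f := fun j t => ((d + 1).choose j : ℝ) * B (d + 1) ((2 * x - j) - 2 * t))
              (fun j _ => (B_intervalIntegrable (d+1) (2 * x - j) 2 0 1).const_mul _)).trans ?_
            exact Finset.sum_congr rfl fun j _ => intervalIntegral.integral_const_mul _ _
        _ = ∑ j ∈ Finset.range (d + 2), ((d + 1).choose j : ℝ) * (f j + f (j + 1)) := by
            rw [Finset.mul_sum]
            refine Finset.sum_congr rfl fun j _ => ?_
            rw [B_half d (2 * x - j)]
            have : (2 * x - (j:ℝ)) - 1 = 2 * x - ((j:ℕ)+1 : ℕ) := by push_cast; ring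
            rw [this]
            simp only [hf]
            ring
    have hp : ∀ j : ℕ, ((d + 2).choose (j + 1) : ℝ)
        = ((d + 1).choose j : ℝ) + ((d + 1).choose (j + 1) : ℝ) := by
      intro j; exact_mod_cast Nat.choose_succ_succ (d + 1) j
    have e1 : ∑ j ∈ Finset.range (d + 3), ((d + 2).choose j : ℝ) * f j
        = ∑ j ∈ Finset.range (d + 2),
            (((d + 1).choose j : ℝ) + ((d + 1).choose (j + 1) : ℝ)) * f (j + 1) + f 0 := by
      rw [Finset.sum_range_succ' (fun j => ((d + 2).choose j : ℝ) * f j) (d + 2)]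
      simp [hp]
    have e2 : ∑ j ∈ Finset.range (d + 2), ((d + 1).choose (j + 1) : ℝ) * f (j + 1) + f 0
        = ∑ j ∈ Finset.range (d + 2), ((d + 1).choose j : ℝ) * f j := by
      have h := Finset.sum_range_succ' (fun j => ((d + 1).choose j : ℝ) * f j) (d + 2)
      rw [Finset.sum_range_succ] at h
      rw [Nat.choose_eq_zero_of_lt (by omega)] at h
      simp at h
      rw [← h]
    have goalshape : ∑ j ∈ Finset.range (d + 1 + 2), (((d + 1) + 1).choose j : ℝ)
        * B (d + 1 + 1) (2 * x - j) = ∑ j ∈ Finset.range (d + 3), ((d + 2).choose j : ℝ) * f j := by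
      rfl
    rw [goalshape, e1, step1]
    simp only [mul_add, add_mul, Finset.sum_add_distrib]
    linarith [e2]

theorem descent_poly_two_scale (d n : ℕ) (hd : 1 ≤ d) (hn : 1 ≤ n) (k : ℤ) :
    (Nat.factorial d : ℝ) * ((2 * n : ℕ) : ℝ) ^ d * B (d + 1) ((k : ℝ) + 1 / (2 * n : ℕ)) =
      ∑ j ∈ Finset.range (d + 2), ((d + 1).choose j : ℝ) *
        ((Nat.factorial d : ℝ) * (n : ℝ) ^ d * B (d + 1) (((2 * k - j : ℤ) : ℝ) + 1 / n)) := by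
  have hn0 : (n:ℝ) ≠ 0 := Nat.cast_ne_zero.mpr (by omega)
  have harg : ∀ j : ℕ, 2 * ((k:ℝ) + 1 / ((2*n:ℕ):ℝ)) - j = ((2*k - j : ℤ):ℝ) + 1/n := by
    intro j; push_cast; field_simp; ring
  have key := B_refine d ((k:ℝ) + 1 / ((2*n:ℕ):ℝ))
  have h1 : (Nat.factorial d : ℝ) * ((2*n:ℕ):ℝ)^d * B (d+1) ((k:ℝ) + 1/((2*n:ℕ):ℝ))
      = (Nat.factorial d : ℝ) * (n:ℝ)^d * ((2:ℝ)^d * B (d+1) ((k:ℝ) + 1/((2*n:ℕ):ℝ))) := by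
    push_cast; ring
  rw [h1, key, Finset.mul_sum]
  refine Finset.sum_congr rfl fun j _ => ?_
  rw [harg j]
  ring
end
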